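/- Let q be a positive vector and m a Metzler matrix. The function l(x) = ⟨q, mx⟩/⟨q, x⟩ on the positive orthant, viewed as a map from (K₊, d) (Hilbert's projective metric) to ℝ, is Lipschitz continuous with Lipschitz constant bounded above by sup_{x ∈ K \ {0}} inf_{a ∈ ℝ} ⟨q, |m − a·id| x⟩ / ⟨q, x⟩, where |·| denotes taking entrywise absolute values. -/

import Mathlib

open Finset Matrix

/-- Hilbert's projective metric on the open positive orthant of `ℝ^n`. -/
noncomputable def hilbertDist {n : ℕ} [NeZero n] (x y : Fin n → ℝ) : ℝ :=
  Real.log (Finset.univ.sup' Finset.univ_nonempty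
    fun p : Fin n × Fin n => x p.1 * y p.2 / (x p.2 * y p.1))

/-- A Metzler matrix: all off-diagonal entries are nonnegative. -/
def IsMetzler {n : ℕ} (m : Matrix (Fin n) (Fin n) ℝ) : Prop :=
  ∀ i j, i ≠ j → 0 ≤ m i j

/-- Swap the order of summation: `⟨q, M w⟩ = ∑ⱼ wⱼ ∑ᵢ qᵢ Mᵢⱼ`. -/
lemma sum_swap_dot {n : ℕ} (q w : Fin n → ℝ) (M : Matrix (Fin n) (Fin n) ℝ) :
    q ⬝ᵥ M.mulVec w = ∑ j, w j * (∑ i, q i * M i j) := by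
  simp only [dotProduct, Matrix.mulVec, Finset.mul_sum]
  rw [Finset.sum_comm]
  exact Finset.sum_congr rfl fun j _ => Finset.sum_congr rfl fun i _ => by ring

/-- The key algebraic inequality. -/
lemma key_alg {n : ℕ} (q z c S T : Fin n → ℝ) {s d a : ℝ}
    (hq : ∀ i, 0 ≤ q i) (hz : ∀ i, 0 ≤ z i) (hd : 0 ≤ d)
    (hc : ∀ j, |c j - s| ≤ d / 2)
    (hST : ∀ j, |S j - a * q j| ≤ T j) :
    |(∑ j, (c j * z j) * S j) * (∑ j, q j * z j)
      - (∑ j, z j * S j) * (∑ j, q j * (c j * z j))|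
     ≤ d * (∑ j, z j * T j) * (∑ j, q j * z j) := by
  set Pc := ∑ j, (c j * z j) * S j with hPc
  set P1 := ∑ j, z j * S j with hP1
  set Qc := ∑ j, q j * (c j * z j) with hQc
  set Dq := ∑ j, q j * z j with hDq'
  set A := ∑ j, ((c j - s) * z j) * (S j - a * q j) with hA
  set B := ∑ j, z j * (S j - a * q j) with hB
  set E := ∑ j, ((c j - s) * z j) * q j with hE
  set Mv := ∑ j, z j * T j with hMv
  have hT : ∀ j, 0 ≤ T j := fun j => le_trans (abs_nonneg _) (hST j)
  have hDq : 0 ≤ Dq := Finset.sum_nonneg fun j _ => mul_nonneg (hq j) (hz j)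
  have hMv0 : 0 ≤ Mv := Finset.sum_nonneg fun j _ => mul_nonneg (hz j) (hT j)
  have idA : A = Pc - s * P1 - a * Qc + a * s * Dq := by
    simp only [hA, hPc, hP1, hQc, hDq', Finset.mul_sum, ← Finset.sum_sub_distrib,
      ← Finset.sum_add_distrib]
    exact Finset.sum_congr rfl fun j _ => by ring
  have idB : B = P1 - a * Dq := by
    simp only [hB, hP1, hDq', Finset.mul_sum, ← Finset.sum_sub_distrib]
    exact Finset.sum_congr rfl fun j _ => by ring
  have idE : E = Qc - s * Dq := by
    simp only [hE, hQc, hDq', Finset.mul_sum, ← Finset.sum_sub_distrib]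
    exact Finset.sum_congr rfl fun j _ => by ring
  have hid : Pc * Dq - P1 * Qc = A * Dq - B * E := by rw [idA, idB, idE]; ring
  have bA : |A| ≤ d / 2 * Mv := by
    calc |A| ≤ ∑ j, |((c j - s) * z j) * (S j - a * q j)| :=
          Finset.abs_sum_le_sum_abs _ _
      _ ≤ ∑ j, d / 2 * (z j * T j) := by
          refine Finset.sum_le_sum fun j _ => ?_
          rw [abs_mul, abs_mul, abs_of_nonneg (hz j)]
          have h1 : |c j - s| * z j ≤ d / 2 * z j :=
            mul_le_mul_of_nonneg_right (hc j) (hz j)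
          have h2 : |c j - s| * z j * |S j - a * q j| ≤ d / 2 * z j * T j :=
            mul_le_mul h1 (hST j) (abs_nonneg _)
              (mul_nonneg (by linarith) (hz j))
          linarith [h2, (by ring : d / 2 * z j * T j = d / 2 * (z j * T j))]
      _ = d / 2 * Mv := by rw [hMv, Finset.mul_sum]
  have bB : |B| ≤ Mv := by
    calc |B| ≤ ∑ j, |z j * (S j - a * q j)| := Finset.abs_sum_le_sum_abs _ _
      _ ≤ ∑ j, z j * T j := by
          refine Finset.sum_le_sum fun j _ => ?_
          rw [abs_mul, abs_of_nonneg (hz j)]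
          exact mul_le_mul_of_nonneg_left (hST j) (hz j)
  have bE : |E| ≤ d / 2 * Dq := by
    calc |E| ≤ ∑ j, |((c j - s) * z j) * q j| := Finset.abs_sum_le_sum_abs _ _
      _ ≤ ∑ j, d / 2 * (q j * z j) := by
          refine Finset.sum_le_sum fun j _ => ?_
          rw [abs_mul, abs_mul, abs_of_nonneg (hz j), abs_of_nonneg (hq j)]
          have := mul_le_mul_of_nonneg_right
            (mul_le_mul_of_nonneg_right (hc j) (hz j)) (hq j)
          linarith [this, (by ring : d / 2 * z j * q j = d / 2 * (q j * z j))]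
      _ = d / 2 * Dq := by rw [hDq', Finset.mul_sum]
  rw [hid]
  have t1 : |A * Dq| ≤ d / 2 * Mv * Dq := by
    rw [abs_mul, abs_of_nonneg hDq]
    exact mul_le_mul_of_nonneg_right bA hDq
  have t2 : |B * E| ≤ Mv * (d / 2 * Dq) := by
    rw [abs_mul]
    exact mul_le_mul bB bE (abs_nonneg _) hMv0
  calc |A * Dq - B * E| ≤ |A * Dq| + |B * E| := abs_sub _ _
    _ ≤ d / 2 * Mv * Dq + Mv * (d / 2 * Dq) := add_le_add t1 t2
    _ = d * Mv * Dq := by ring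

/-- The function `l(x) = ⟨q, m x⟩ / ⟨q, x⟩` is Lipschitz from the positive orthant
endowed with Hilbert's projective metric to `ℝ`, with Lipschitz constant bounded by
`sup_{x ∈ K \ {0}} inf_{a ∈ ℝ} ⟨q, |m - a·id| x⟩ / ⟨q, x⟩`. -/
theorem lipschitz_bound_hilbert {n : ℕ} [NeZero n]
    (q : Fin n → ℝ) (hq : ∀ i, 0 < q i)
    (m : Matrix (Fin n) (Fin n) ℝ) (hm : IsMetzler m) :
    ∀ x y : Fin n → ℝ, (∀ i, 0 < x i) → (∀ i, 0 < y i) →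
      |q ⬝ᵥ m.mulVec x / (q ⬝ᵥ x) - q ⬝ᵥ m.mulVec y / (q ⬝ᵥ y)| ≤
        (⨆ z : {z : Fin n → ℝ // (∀ i, 0 ≤ z i) ∧ z ≠ 0},
          ⨅ a : ℝ, q ⬝ᵥ ((m - a • (1 : Matrix (Fin n) (Fin n) ℝ)).map (fun r => |r|)).mulVec z.1
            / (q ⬝ᵥ z.1)) * hilbertDist x y := by
  intro x y hx hy
  classical
  obtain ⟨j0, -⟩ := (Finset.univ_nonempty : (Finset.univ : Finset (Fin n)).Nonempty)
  -- the function inside the supremum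
  set g : (Fin n → ℝ) → ℝ → ℝ := fun z a =>
    q ⬝ᵥ ((m - a • (1 : Matrix (Fin n) (Fin n) ℝ)).map (fun r => |r|)).mulVec z
      / (q ⬝ᵥ z) with hg_def
  set L : ℝ := ⨆ z : {z : Fin n → ℝ // (∀ i, 0 ≤ z i) ∧ z ≠ 0}, ⨅ a : ℝ, g z.1 a with hL_def
  -- positivity facts
  have hdot_pos : ∀ z : Fin n → ℝ, (∀ i, 0 ≤ z i) → z ≠ 0 → 0 < q ⬝ᵥ z := by
    intro z hz hz0
    obtain ⟨j, hj⟩ := Function.ne_iff.mp hz0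
    refine Finset.sum_pos' (fun i _ => mul_nonneg (hq i).le (hz i)) ⟨j, Finset.mem_univ j, ?_⟩
    exact mul_pos (hq j) (lt_of_le_of_ne (hz j) (Ne.symm hj))
  have hg_nonneg : ∀ z : Fin n → ℝ, (∀ i, 0 ≤ z i) → ∀ a, 0 ≤ g z a := by
    intro z hz a
    apply div_nonneg _ (Finset.sum_nonneg fun i _ => mul_nonneg (hq i).le (hz i))
    simp only [dotProduct, Matrix.mulVec, Matrix.map_apply]
    refine Finset.sum_nonneg fun i _ => mul_nonneg (hq i).le ?_
    exact Finset.sum_nonneg fun j _ => mul_nonneg (abs_nonneg _) (hz j)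
  -- boundedness of the sup
  set C0 : ℝ := Finset.univ.sup' Finset.univ_nonempty
    (fun j => (∑ i, q i * |m i j|) / q j) with hC0
  have hbddA : BddAbove (Set.range fun z : {z : Fin n → ℝ // (∀ i, 0 ≤ z i) ∧ z ≠ 0} =>
      ⨅ a : ℝ, g z.1 a) := by
    refine ⟨C0, ?_⟩
    rintro _ ⟨⟨z, hz, hz0⟩, rfl⟩
    have hbb : BddBelow (Set.range fun a => g z a) :=
      ⟨0, by rintro _ ⟨a, rfl⟩; exact hg_nonneg z hz a⟩
    refine le_trans (ciInf_le hbb 0) ?_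
    have hzero : g z 0 = q ⬝ᵥ (m.map fun r => |r|).mulVec z / (q ⬝ᵥ z) := by
      simp [hg_def]
    rw [hzero, div_le_iff₀ (hdot_pos z hz hz0)]
    rw [sum_swap_dot]
    have hterm : ∀ j, z j * (∑ i, q i * (m.map fun r => |r|) i j) ≤ C0 * (q j * z j) := by
      intro j
      have h1 : (∑ i, q i * |m i j|) / q j ≤ C0 := by
        rw [hC0]
        exact Finset.le_sup' (fun j => (∑ i, q i * |m i j|) / q j) (Finset.mem_univ j)
      have h2 : (∑ i, q i * |m i j|) ≤ C0 * q j := by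
        rw [div_le_iff₀ (hq j)] at h1; linarith
      have h3 : (∑ i, q i * (m.map fun r => |r|) i j) = ∑ i, q i * |m i j| := by
        simp [Matrix.map_apply]
      rw [h3]
      calc z j * (∑ i, q i * |m i j|) ≤ z j * (C0 * q j) :=
            mul_le_mul_of_nonneg_left h2 (hz j)
        _ = C0 * (q j * z j) := by ring
    calc ∑ j, z j * (∑ i, q i * (m.map fun r => |r|) i j)
        ≤ ∑ j, C0 * (q j * z j) := Finset.sum_le_sum fun j _ => hterm j
      _ = C0 * (q ⬝ᵥ z) := by rw [← Finset.mul_sum]; rfl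
  have hL0 : 0 ≤ L := by
    have h1 : (fun _ : Fin n => (1 : ℝ)) ≠ 0 := by
      intro h; exact one_ne_zero (congrFun h j0)
    have := le_ciSup hbddA ⟨fun _ => (1 : ℝ), fun i => zero_le_one, h1⟩
    refine le_trans ?_ this
    exact le_ciInf fun a => hg_nonneg _ (fun i => zero_le_one) a
  -- the log-coordinates
  set c : Fin n → ℝ := fun i => Real.log (y i / x i) with hc_def
  obtain ⟨i1, -, hi1⟩ := Finset.exists_max_image Finset.univ c Finset.univ_nonempty
  obtain ⟨i0, -, hi0⟩ := Finset.exists_min_image Finset.univ c Finset.univ_nonempty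
  set s0 : ℝ := (c i1 + c i0) / 2 with hs0
  set d0 : ℝ := c i1 - c i0 with hd0_def
  have hd0 : 0 ≤ d0 := by
    have := hi0 i1 (Finset.mem_univ _); simp only [hd0_def]; linarith
  have hcb : ∀ j, |c j - s0| ≤ d0 / 2 := by
    intro j
    have h1 := hi1 j (Finset.mem_univ _)
    have h2 := hi0 j (Finset.mem_univ _)
    rw [abs_le]; constructor <;> simp only [hs0, hd0_def] <;> linarith
  -- the path and its derivative
  set w : ℝ → Fin n → ℝ := fun t j => x j * Real.exp (t * c j) with hw
  have hwpos : ∀ t j, 0 < w t j := fun t j => mul_pos (hx j) (Real.exp_pos _)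
  set S : Fin n → ℝ := fun j => ∑ i, q i * m i j with hS
  set N : ℝ → ℝ := fun t => ∑ j, w t j * S j with hN
  set D : ℝ → ℝ := fun t => ∑ j, q j * w t j with hD
  have hDpos : ∀ t, 0 < D t := fun t =>
    Finset.sum_pos (fun j _ => mul_pos (hq j) (hwpos t j)) Finset.univ_nonempty
  set f : ℝ → ℝ := fun t => N t / D t with hf
  set N' : ℝ → ℝ := fun t => ∑ j, (c j * w t j) * S j with hN'
  set D' : ℝ → ℝ := fun t => ∑ j, q j * (c j * w t j) with hD'
  set f' : ℝ → ℝ := fun t => (N' t * D t - N t * D' t) / (D t) ^ 2 with hf'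
  have hderivw : ∀ t j, HasDerivAt (fun t => w t j) (c j * w t j) t := by
    intro t j
    have h1 : HasDerivAt (fun t : ℝ => t * c j) (c j) t := by
      simpa using (hasDerivAt_id t).mul_const (c j)
    have h2 := (h1.exp).const_mul (x j)
    refine h2.congr_deriv ?_
    simp only [hw]; ring
  have hderivN : ∀ t, HasDerivAt N (N' t) t := by
    intro t
    exact HasDerivAt.fun_sum fun j _ => (hderivw t j).mul_const (S j)
  have hderivD : ∀ t, HasDerivAt D (D' t) t := by
    intro t
    exact HasDerivAt.fun_sum fun j _ => (hderivw t j).const_mul (q j)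
  have hderivf : ∀ t, HasDerivAt f (f' t) t := fun t =>
    (hderivN t).div (hderivD t) (hDpos t).ne'
  -- the derivative bound
  have hbound : ∀ t : ℝ, |f' t| ≤ d0 * L := by
    intro t
    have hzt_pos : ∀ j, 0 < w t j := hwpos t
    have hzt_ne : w t ≠ 0 := by
      intro h; exact (hzt_pos j0).ne' (congrFun h j0)
    have key : ∀ a : ℝ, |f' t| ≤ d0 * g (w t) a := by
      intro a
      set T : Fin n → ℝ := fun j => ∑ i, q i * |m i j - (if i = j then a else 0)| with hT
      have hST : ∀ j, |S j - a * q j| ≤ T j := by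
        intro j
        have h1 : S j - a * q j = ∑ i, q i * (m i j - (if i = j then a else 0)) := by
          simp only [hS, mul_sub, Finset.sum_sub_distrib, mul_ite, mul_zero]
          congr 1
          rw [Finset.sum_ite_eq' Finset.univ j (fun i => q i * a)]
          simp [mul_comm]
        rw [h1]
        refine le_trans (Finset.abs_sum_le_sum_abs _ _) ?_
        refine le_of_eq (Finset.sum_congr rfl fun i _ => ?_)
        rw [abs_mul, abs_of_nonneg (hq i).le]
      have keyineq := key_alg q (w t) c S T (fun i => (hq i).le)
        (fun i => (hzt_pos i).le) hd0 hcb hST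
      have hMv_eq : q ⬝ᵥ ((m - a • (1 : Matrix (Fin n) (Fin n) ℝ)).map (fun r => |r|)).mulVec (w t)
          = ∑ j, w t j * T j := by
        rw [sum_swap_dot]
        refine Finset.sum_congr rfl fun j _ => ?_
        congr 1
        refine Finset.sum_congr rfl fun i _ => ?_
        congr 1
        simp [Matrix.map_apply, Matrix.sub_apply, Matrix.smul_apply, Matrix.one_apply,
          mul_ite, mul_one, mul_zero]
      have hDq_eq : q ⬝ᵥ (w t) = D t := rfl
      have hnum : |N' t * D t - N t * D' t| ≤ d0 * (∑ j, w t j * T j) * D t := keyineq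
      have hgval : g (w t) a = (∑ j, w t j * T j) / D t := by
        simp only [hg_def]; rw [hMv_eq, hDq_eq]
      rw [hgval]
      have hD2 : (0:ℝ) < (D t) ^ 2 := pow_pos (hDpos t) 2
      have : |f' t| = |N' t * D t - N t * D' t| / (D t) ^ 2 := by
        rw [hf', abs_div, abs_of_nonneg hD2.le]
      rw [this]
      rw [div_le_iff₀ hD2]
      calc |N' t * D t - N t * D' t| ≤ d0 * (∑ j, w t j * T j) * D t := hnum
        _ = d0 * ((∑ j, w t j * T j) / D t) * (D t) ^ 2 := by
            have hDne : D t ≠ 0 := (hDpos t).ne'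
            field_simp
      -- done
    have hbb : BddBelow (Set.range fun a => g (w t) a) :=
      ⟨0, by rintro _ ⟨a, rfl⟩; exact hg_nonneg _ (fun i => (hzt_pos i).le) a⟩
    have hinf : |f' t| ≤ d0 * ⨅ a : ℝ, g (w t) a := by
      rcases eq_or_lt_of_le hd0 with h0 | hpos
      · have h1 := key 0
        rw [← h0] at h1 ⊢
        simpa using h1
      · have h2 : |f' t| / d0 ≤ ⨅ a : ℝ, g (w t) a := by
          refine le_ciInf fun a => ?_
          rw [div_le_iff₀ hpos]
          calc |f' t| ≤ d0 * g (w t) a := key a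
            _ = g (w t) a * d0 := by ring
        calc |f' t| = d0 * (|f' t| / d0) := by
              rw [mul_comm, div_mul_cancel₀ _ hpos.ne']
          _ ≤ d0 * ⨅ a : ℝ, g (w t) a := mul_le_mul_of_nonneg_left h2 hd0
    refine le_trans hinf (mul_le_mul_of_nonneg_left ?_ hd0)
    exact le_ciSup hbddA ⟨w t, fun i => (hzt_pos i).le, hzt_ne⟩
  -- mean value inequality
  have hmain : |f 1 - f 0| ≤ d0 * L := by
    have h := Convex.norm_image_sub_le_of_norm_hasDerivWithin_le
      (f := f) (f' := f') (s := Set.univ) (C := d0 * L)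
      (fun t _ => (hderivf t).hasDerivWithinAt)
      (fun t _ => by simpa [Real.norm_eq_abs] using hbound t)
      convex_univ (Set.mem_univ (0:ℝ)) (Set.mem_univ (1:ℝ))
    simpa [Real.norm_eq_abs] using h
  -- endpoint identifications
  have hw0 : ∀ j, w 0 j = x j := fun j => by simp [hw]
  have hw1 : ∀ j, w 1 j = y j := by
    intro j
    show x j * Real.exp (1 * c j) = y j
    have hcj : c j = Real.log (y j / x j) := rfl
    rw [one_mul, hcj, Real.exp_log (div_pos (hy j) (hx j)), mul_comm,
      div_mul_cancel₀ _ (hx j).ne']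
  have hf0 : f 0 = q ⬝ᵥ m.mulVec x / (q ⬝ᵥ x) := by
    have hNeq : N 0 = q ⬝ᵥ m.mulVec x := by
      rw [sum_swap_dot q x m]
      show (∑ j, w 0 j * S j) = _
      exact Finset.sum_congr rfl fun j _ => by rw [hw0 j]
    have hDeq : D 0 = q ⬝ᵥ x := by
      show (∑ j, q j * w 0 j) = _
      exact Finset.sum_congr rfl fun j _ => by rw [hw0 j]
    show N 0 / D 0 = _
    rw [hNeq, hDeq]
  have hf1 : f 1 = q ⬝ᵥ m.mulVec y / (q ⬝ᵥ y) := by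
    have hNeq : N 1 = q ⬝ᵥ m.mulVec y := by
      rw [sum_swap_dot q y m]
      show (∑ j, w 1 j * S j) = _
      exact Finset.sum_congr rfl fun j _ => by rw [hw1 j]
    have hDeq : D 1 = q ⬝ᵥ y := by
      show (∑ j, q j * w 1 j) = _
      exact Finset.sum_congr rfl fun j _ => by rw [hw1 j]
    show N 1 / D 1 = _
    rw [hNeq, hDeq]
  -- compare d0 with the Hilbert distance
  have hH : d0 ≤ hilbertDist x y := by
    unfold hilbertDist
    have hmem : x i0 * y i1 / (x i1 * y i0) ≤ Finset.univ.sup' Finset.univ_nonempty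
        (fun p : Fin n × Fin n => x p.1 * y p.2 / (x p.2 * y p.1)) :=
      Finset.le_sup' (fun p : Fin n × Fin n => x p.1 * y p.2 / (x p.2 * y p.1))
        (Finset.mem_univ ((i0, i1) : Fin n × Fin n))
    have hpos : 0 < x i0 * y i1 / (x i1 * y i0) := by
      have := hx i0; have := hy i1; have := hx i1; have := hy i0; positivity
    refine le_trans ?_ (Real.log_le_log hpos hmem)
    rw [Real.log_div (mul_pos (hx i0) (hy i1)).ne' (mul_pos (hx i1) (hy i0)).ne',
      Real.log_mul (hx i0).ne' (hy i1).ne', Real.log_mul (hx i1).ne' (hy i0).ne']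
    simp only [hd0_def, hc_def]
    rw [Real.log_div (hy i1).ne' (hx i1).ne', Real.log_div (hy i0).ne' (hx i0).ne']
    ring_nf
    linarith
  -- conclude
  calc |q ⬝ᵥ m.mulVec x / (q ⬝ᵥ x) - q ⬝ᵥ m.mulVec y / (q ⬝ᵥ y)|
      = |f 1 - f 0| := by rw [hf0, hf1, abs_sub_comm]
    _ ≤ d0 * L := hmain
    _ ≤ L * hilbertDist x y := by
        rw [mul_comm]
        exact mul_le_mul_of_nonneg_left hH hL0
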